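/- The multiplicities μ₁, μ₂, μ₃ of the two-dimensional fundamental parallelepipeds ◊(w₂,w₃), ◊(w₁,w₃), ◊(w₁,w₂) all divide the multiplicity μ of the three-dimensional fundamental parallelepiped ◊(w₁,w₂,w₃). -/

import Mathlib

noncomputable section

/-- The coercion of an integer vector in `ℤ³` to `ℝ³`. -/
def coe3 (v : Fin 3 → ℤ) : Fin 3 → ℝ := fun i => (v i : ℝ)

/-- A vector of `ℤ³` is primitive if the greatest common divisor of its components is 1. -/
def IsPrimitive (v : Fin 3 → ℤ) : Prop := Int.gcd (v 0) (Int.gcd (v 1) (v 2)) = 1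

/-- The fundamental parallelepiped spanned by two vectors:
`◊(a,b) = {s•a + t•b : s,t ∈ [0,1)}`. -/
def para2 (a b : Fin 3 → ℝ) : Set (Fin 3 → ℝ) :=
  {x | ∃ s t : ℝ, 0 ≤ s ∧ s < 1 ∧ 0 ≤ t ∧ t < 1 ∧ x = s • a + t • b}

/-- The fundamental parallelepiped spanned by three vectors:
`◊(a,b,c) = {s•a + t•b + u•c : s,t,u ∈ [0,1)}`. -/
def para3 (a b c : Fin 3 → ℝ) : Set (Fin 3 → ℝ) :=
  {x | ∃ s t u : ℝ, 0 ≤ s ∧ s < 1 ∧ 0 ≤ t ∧ t < 1 ∧ 0 ≤ u ∧ u < 1 ∧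
    x = s • a + t • b + u • c}

/-- The integral points `ℤ³ ∩ ◊(a,b)` of a two-dimensional fundamental parallelepiped. -/
def H2pts (a b : Fin 3 → ℤ) : Set (Fin 3 → ℤ) := {x | coe3 x ∈ para2 (coe3 a) (coe3 b)}

/-- The integral points `ℤ³ ∩ ◊(a,b,c)` of a three-dimensional fundamental parallelepiped. -/
def H3pts (a b c : Fin 3 → ℤ) : Set (Fin 3 → ℤ) :=
  {x | coe3 x ∈ para3 (coe3 a) (coe3 b) (coe3 c)}

lemma coe3_injective : Function.Injective coe3 := by
  intro x y h
  funext i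
  have := congrFun h i
  simpa [coe3] using this

lemma coe3_add (x y : Fin 3 → ℤ) : coe3 (x + y) = coe3 x + coe3 y := by
  funext i; simp [coe3]

lemma coe3_sub (x y : Fin 3 → ℤ) : coe3 (x - y) = coe3 x - coe3 y := by
  funext i; simp [coe3]

lemma coe3_neg (x : Fin 3 → ℤ) : coe3 (-x) = - coe3 x := by
  funext i; simp [coe3]

lemma coe3_zero : coe3 0 = 0 := by funext i; simp [coe3]

lemma coe3_zsmul (n : ℤ) (x : Fin 3 → ℤ) : coe3 (n • x) = (n : ℝ) • coe3 x := by
  funext i; simp [coe3]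

lemma key (a b c : Fin 3 → ℤ)
    (hli : LinearIndependent ℝ ![coe3 a, coe3 b, coe3 c]) :
    (H2pts b c).ncard ∣ (H3pts a b c).ncard := by
  classical
  set va := coe3 a with hva
  set vb := coe3 b with hvb
  set vc := coe3 c with hvc
  -- basis of ℝ³
  have hcard : Fintype.card (Fin 3) = Module.finrank ℝ (Fin 3 → ℝ) := by simp
  let B : Module.Basis (Fin 3) ℝ (Fin 3 → ℝ) := basisOfLinearIndependentOfCardEqFinrank hli hcard
  have hB : ⇑B = ![va, vb, vc] := coe_basisOfLinearIndependentOfCardEqFinrank _ _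
  have hB0 : B 0 = va := by rw [hB]; rfl
  have hB1 : B 1 = vb := by rw [hB]; rfl
  have hB2 : B 2 = vc := by rw [hB]; rfl
  have hsum : ∀ x : Fin 3 → ℝ,
      x = B.repr x 0 • va + B.repr x 1 • vb + B.repr x 2 • vc := by
    intro x
    have h := B.sum_repr x
    rw [Fin.sum_univ_three, hB0, hB1, hB2] at h
    exact h.symm
  -- uniqueness of coefficients
  have huniq : ∀ s t u s' t' u' : ℝ,
      s • va + t • vb + u • vc = s' • va + t' • vb + u' • vc →
      s = s' ∧ t = t' ∧ u = u' := by
    intro s t u s' t' u' h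
    have hLI := Fintype.linearIndependent_iff.mp hli
    have h0 : ∑ i, (![s - s', t - t', u - u'] : Fin 3 → ℝ) i • ![va, vb, vc] i = 0 := by
      rw [Fin.sum_univ_three]
      simp only [Matrix.cons_val_zero, Matrix.cons_val_one, Matrix.head_cons,
        Matrix.cons_val_two, Matrix.tail_cons]
      linear_combination (norm := module) h
    have := hLI ![s - s', t - t', u - u'] h0
    exact ⟨sub_eq_zero.mp (this 0), sub_eq_zero.mp (this 1), sub_eq_zero.mp (this 2)⟩
  -- the lattice L = ℤa + ℤb + ℤc
  set L : Submodule ℤ (Fin 3 → ℤ) := Submodule.span ℤ (Set.range ![a, b, c]) with hLdef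
  have memL : ∀ x : Fin 3 → ℤ,
      x ∈ L ↔ ∃ n : Fin 3 → ℤ, x = n 0 • a + n 1 • b + n 2 • c := by
    intro x
    rw [hLdef, Submodule.mem_span_range_iff_exists_fun]
    constructor
    · rintro ⟨n, hn⟩
      exact ⟨n, by rw [← hn, Fin.sum_univ_three]; rfl⟩
    · rintro ⟨n, hn⟩
      exact ⟨n, by rw [Fin.sum_univ_three, hn]; rfl⟩
  have hcombo : ∀ n₀ n₁ n₂ : ℤ, coe3 (n₀ • a + n₁ • b + n₂ • c)
      = (n₀ : ℝ) • va + (n₁ : ℝ) • vb + (n₂ : ℝ) • vc := by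
    intro n₀ n₁ n₂
    rw [coe3_add, coe3_add, coe3_zsmul, coe3_zsmul, coe3_zsmul, ← hva, ← hvb, ← hvc]
  -- every lattice class has a representative in the parallelepiped
  have reduce3 : ∀ z : Fin 3 → ℤ, ∃ x ∈ H3pts a b c, z - x ∈ L := by
    intro z
    set r : Fin 3 → ℝ := fun i => B.repr (coe3 z) i with hr
    refine ⟨z - (⌊r 0⌋ • a + ⌊r 1⌋ • b + ⌊r 2⌋ • c), ?_, ?_⟩
    · refine ⟨Int.fract (r 0), Int.fract (r 1), Int.fract (r 2),
        Int.fract_nonneg _, Int.fract_lt_one _, Int.fract_nonneg _, Int.fract_lt_one _,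
        Int.fract_nonneg _, Int.fract_lt_one _, ?_⟩
      rw [coe3_sub, hcombo]
      have hz := hsum (coe3 z)
      simp only [Int.fract]
      rw [hz]
      module
    · rw [sub_sub_cancel]
      exact (memL _).mpr ⟨![⌊r 0⌋, ⌊r 1⌋, ⌊r 2⌋], rfl⟩
  -- distinct points of the parallelepiped are in distinct classes
  have uniq3 : ∀ x ∈ H3pts a b c, ∀ y ∈ H3pts a b c, x - y ∈ L → x = y := by
    rintro x ⟨s, t, u, hs0, hs1, ht0, ht1, hu0, hu1, hx⟩
      y ⟨s', t', u', hs0', hs1', ht0', ht1', hu0', hu1', hy⟩ hxy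
    obtain ⟨n, hn⟩ := (memL _).mp hxy
    have h1 : coe3 x - coe3 y = (n 0 : ℝ) • va + (n 1 : ℝ) • vb + (n 2 : ℝ) • vc := by
      rw [← coe3_sub, hn]; exact hcombo _ _ _
    rw [hx, hy] at h1
    have h2 : s • va + t • vb + u • vc
        = (s' + (n 0 : ℝ)) • va + (t' + (n 1 : ℝ)) • vb + (u' + (n 2 : ℝ)) • vc := by
      linear_combination (norm := module) h1
    obtain ⟨e0, e1, e2⟩ := huniq _ _ _ _ _ _ h2
    have hn0 : n 0 = 0 := by
      have hb1 : -1 < (n 0 : ℝ) := by linarith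
      have hb2 : (n 0 : ℝ) < 1 := by linarith
      have : -1 < n 0 ∧ n 0 < 1 := ⟨by exact_mod_cast hb1, by exact_mod_cast hb2⟩
      omega
    have hn1 : n 1 = 0 := by
      have hb1 : -1 < (n 1 : ℝ) := by linarith
      have hb2 : (n 1 : ℝ) < 1 := by linarith
      have : -1 < n 1 ∧ n 1 < 1 := ⟨by exact_mod_cast hb1, by exact_mod_cast hb2⟩
      omega
    have hn2 : n 2 = 0 := by
      have hb1 : -1 < (n 2 : ℝ) := by linarith
      have hb2 : (n 2 : ℝ) < 1 := by linarith
      have : -1 < n 2 ∧ n 2 < 1 := ⟨by exact_mod_cast hb1, by exact_mod_cast hb2⟩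
      omega
    apply coe3_injective
    rw [hx, hy, e0, e1, e2, hn0, hn1, hn2]
    push_cast
    module
  -- reduction into the 2-dimensional parallelepiped
  have reduce2 : ∀ (p q : ℝ) (z : Fin 3 → ℤ), coe3 z = p • vb + q • vc →
      ∃ x ∈ H2pts b c, z - x ∈ L := by
    intro p q z hz
    refine ⟨z - ((0:ℤ) • a + ⌊p⌋ • b + ⌊q⌋ • c),
      ⟨Int.fract p, Int.fract q, Int.fract_nonneg _, Int.fract_lt_one _,
        Int.fract_nonneg _, Int.fract_lt_one _, ?_⟩, ?_⟩
    · rw [coe3_sub, hcombo, hz]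
      simp only [Int.fract]
      push_cast
      module
    · rw [sub_sub_cancel]
      exact (memL _).mpr ⟨![0, ⌊p⌋, ⌊q⌋], rfl⟩
  have h2sub : H2pts b c ⊆ H3pts a b c := by
    rintro x ⟨s, t, hs0, hs1, ht0, ht1, hx⟩
    exact ⟨0, s, t, le_refl 0, one_pos, hs0, hs1, ht0, ht1, by rw [hx, zero_smul, zero_add]⟩
  -- the quotient group
  have hφ : ∀ x y : Fin 3 → ℤ, L.mkQ x = L.mkQ y ↔ x - y ∈ L := by
    intro x y
    simp only [Submodule.mkQ_apply]
    exact Submodule.Quotient.eq L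
  have hbij : Function.Bijective (fun x : H3pts a b c => L.mkQ x.1) := by
    constructor
    · rintro ⟨x, hx⟩ ⟨y, hy⟩ hxy
      exact Subtype.ext (uniq3 x hx y hy ((hφ x y).mp hxy))
    · intro q
      obtain ⟨z, rfl⟩ := Submodule.Quotient.mk_surjective L q
      obtain ⟨x, hx, hzx⟩ := reduce3 z
      exact ⟨⟨x, hx⟩, (hφ x z).mpr (neg_sub z x ▸ neg_mem hzx)⟩
  have hcard3 : (H3pts a b c).ncard = Nat.card ((Fin 3 → ℤ) ⧸ L) := by
    rw [← Nat.card_coe_set_eq]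
    exact Nat.card_congr (Equiv.ofBijective _ hbij)
  -- the image of H2pts is a subgroup
  let S : AddSubgroup ((Fin 3 → ℤ) ⧸ L) :=
  { carrier := L.mkQ '' (H2pts b c)
    zero_mem' := ⟨0, ⟨0, 0, le_refl 0, one_pos, le_refl 0, one_pos,
      by rw [coe3_zero, zero_smul, zero_smul, zero_add]⟩, map_zero _⟩
    add_mem' := by
      rintro q1 q2 ⟨x, ⟨s, t, hs0, hs1, ht0, ht1, hx⟩, rfl⟩
        ⟨y, ⟨s', t', hs0', hs1', ht0', ht1', hy⟩, rfl⟩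
      have hxy : coe3 (x + y) = (s + s') • vb + (t + t') • vc := by
        rw [coe3_add, hx, hy]; module
      obtain ⟨z, hz, hzz⟩ := reduce2 _ _ _ hxy
      refine ⟨z, hz, ?_⟩
      have h1 : L.mkQ (x + y) = L.mkQ z := (hφ _ _).mpr hzz
      rw [← h1, map_add]
    neg_mem' := by
      rintro q ⟨x, ⟨s, t, hs0, hs1, ht0, ht1, hx⟩, rfl⟩
      have hxneg : coe3 (-x) = (-s) • vb + (-t) • vc := by
        rw [coe3_neg, hx]; module
      obtain ⟨z, hz, hzz⟩ := reduce2 _ _ _ hxneg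
      refine ⟨z, hz, ?_⟩
      have h1 : L.mkQ (-x) = L.mkQ z := (hφ _ _).mpr hzz
      rw [← h1, map_neg] }
  have hbij2 : Function.Bijective
      (fun x : H2pts b c => (⟨L.mkQ x.1, ⟨x.1, x.2, rfl⟩⟩ : S)) := by
    constructor
    · rintro ⟨x, hx⟩ ⟨y, hy⟩ h
      have h' : L.mkQ x = L.mkQ y := congrArg Subtype.val h
      exact Subtype.ext (uniq3 x (h2sub hx) y (h2sub hy) ((hφ x y).mp h'))
    · rintro ⟨q, x, hx, rfl⟩
      exact ⟨⟨x, hx⟩, rfl⟩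
  have hcard2 : (H2pts b c).ncard = Nat.card S := by
    rw [← Nat.card_coe_set_eq]
    exact Nat.card_congr (Equiv.ofBijective _ hbij2)
  rw [hcard2, hcard3]
  exact AddSubgroup.card_addSubgroup_dvd_card S

lemma H3pts_swap (a b c : Fin 3 → ℤ) : H3pts a b c = H3pts b a c := by
  ext x
  constructor <;> rintro ⟨s, t, u, h1, h2, h3, h4, h5, h6, hx⟩ <;>
    exact ⟨t, s, u, h3, h4, h1, h2, h5, h6, by rw [hx]; module⟩

lemma H3pts_rot (a b c : Fin 3 → ℤ) : H3pts a b c = H3pts c a b := by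
  ext x
  constructor
  · rintro ⟨s, t, u, h1, h2, h3, h4, h5, h6, hx⟩
    exact ⟨u, s, t, h5, h6, h1, h2, h3, h4, by rw [hx]; module⟩
  · rintro ⟨s, t, u, h1, h2, h3, h4, h5, h6, hx⟩
    exact ⟨t, u, s, h3, h4, h5, h6, h1, h2, by rw [hx]; module⟩

/-- The multiplicities `μ₁, μ₂, μ₃` of the two-dimensional fundamental
parallelepipeds `◊(w₂,w₃), ◊(w₁,w₃), ◊(w₁,w₂)` all divide the multiplicity `μ` of the
three-dimensional fundamental parallelepiped `◊(w₁,w₂,w₃)`. -/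
theorem multiplicities_divide (w₁ w₂ w₃ : Fin 3 → ℤ)
    (hnn₁ : ∀ i, 0 ≤ w₁ i) (hnn₂ : ∀ i, 0 ≤ w₂ i) (hnn₃ : ∀ i, 0 ≤ w₃ i)
    (hp₁ : IsPrimitive w₁) (hp₂ : IsPrimitive w₂) (hp₃ : IsPrimitive w₃)
    (hli : LinearIndependent ℝ ![coe3 w₁, coe3 w₂, coe3 w₃]) :
    (H2pts w₂ w₃).ncard ∣ (H3pts w₁ w₂ w₃).ncard ∧
    (H2pts w₁ w₃).ncard ∣ (H3pts w₁ w₂ w₃).ncard ∧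
    (H2pts w₁ w₂).ncard ∣ (H3pts w₁ w₂ w₃).ncard := by
  have hli2 : LinearIndependent ℝ ![coe3 w₂, coe3 w₁, coe3 w₃] := by
    have h := hli.comp ![1, 0, 2] (by decide)
    have he : ![coe3 w₁, coe3 w₂, coe3 w₃] ∘ ![(1 : Fin 3), 0, 2]
        = ![coe3 w₂, coe3 w₁, coe3 w₃] := by
      funext i; fin_cases i <;> rfl
    rwa [he] at h
  have hli3 : LinearIndependent ℝ ![coe3 w₃, coe3 w₁, coe3 w₂] := by
    have h := hli.comp ![2, 0, 1] (by decide)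
    have he : ![coe3 w₁, coe3 w₂, coe3 w₃] ∘ ![(2 : Fin 3), 0, 1]
        = ![coe3 w₃, coe3 w₁, coe3 w₂] := by
      funext i; fin_cases i <;> rfl
    rwa [he] at h
  refine ⟨key w₁ w₂ w₃ hli, ?_, ?_⟩
  · have := key w₂ w₁ w₃ hli2
    rwa [← H3pts_swap] at this
  · have := key w₃ w₁ w₂ hli3
    rwa [← H3pts_rot] at this

end
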